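/- Let α be a finite set, H ≤ Sym(α), and let L and M be disjoint direct factors of H such that M is d.d.p. indecomposable. If Supp(M) ∩ Supp(L) ≠ ∅, then Supp(M) ⊆ Supp(L). -/

import Mathlib

/-- The support of a subgroup `A ≤ Sym(α)`: the union of the supports of its
elements, i.e. the set of points moved by some element of `A`. -/
def Supp {α : Type*} (A : Subgroup (Equiv.Perm α)) : Set α :=
  {x : α | ∃ a ∈ A, a x ≠ x}

/-- `A` is a disjoint direct factor of `H`: `A ≤ H` and, for every `h ∈ H`, the map
agreeing with `h` on `Supp A` and fixing every point outside `Supp A` is a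
permutation belonging to `A`. -/
def IsDisjointDirectFactor {α : Type*} (H A : Subgroup (Equiv.Perm α)) : Prop :=
  A ≤ H ∧ ∀ h ∈ H, ∃ a ∈ A, (∀ x ∈ Supp A, a x = h x) ∧ ∀ x ∉ Supp A, a x = x

/-- A disjoint direct product decomposition of `K ≤ Sym(α)`: a family of nontrivial
subgroups with pairwise disjoint supports whose join is `K`. -/
def IsDDPDecomposition {α : Type*} (K : Subgroup (Equiv.Perm α)) {r : ℕ}
    (F : Fin r → Subgroup (Equiv.Perm α)) : Prop :=
  (∀ i, F i ≠ ⊥) ∧ (∀ i j, i ≠ j → Disjoint (Supp (F i)) (Supp (F j))) ∧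
    (⨆ i, F i) = K

/-- `K` is d.d.p. indecomposable: it admits no disjoint direct product decomposition
with more than one (nontrivial) factor. -/
def DDPIndecomposable {α : Type*} (K : Subgroup (Equiv.Perm α)) : Prop :=
  ∀ (r : ℕ) (F : Fin r → Subgroup (Equiv.Perm α)), IsDDPDecomposition K F → r ≤ 1

/-- Elements of `M` supported inside a set `U` form a subgroup. -/
def restrSubgroup {α : Type*} (M : Subgroup (Equiv.Perm α)) (U : Set α) :
    Subgroup (Equiv.Perm α) where
  carrier := {g | g ∈ M ∧ ∀ x ∉ U, g x = x}
  one_mem' := ⟨M.one_mem, fun _ _ => rfl⟩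
  mul_mem' := fun hg hh => ⟨M.mul_mem hg.1 hh.1, fun x hx => by
    simp only [Equiv.Perm.mul_apply, hh.2 x hx, hg.2 x hx]⟩
  inv_mem' := fun {g} hg => ⟨M.inv_mem hg.1, fun x hx => by
    have h := hg.2 x hx
    nth_rewrite 1 [← h]
    exact g.symm_apply_apply x⟩

lemma mem_restrSubgroup {α : Type*} {M : Subgroup (Equiv.Perm α)} {U : Set α}
    {g : Equiv.Perm α} : g ∈ restrSubgroup M U ↔ g ∈ M ∧ ∀ x ∉ U, g x = x := Iff.rfl

lemma supp_restr_subset {α : Type*} (M : Subgroup (Equiv.Perm α)) (U : Set α) :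
    Supp (restrSubgroup M U) ⊆ U := by
  rintro x ⟨g, hg, hx⟩
  by_contra h
  exact hx (hg.2 x h)

/-- Let `L` and `M` be disjoint direct factors of `H ≤ Sym(α)`
(`α` finite) with `M` d.d.p. indecomposable.  If `Supp M ∩ Supp L ≠ ∅` then
`Supp M ⊆ Supp L`. -/
theorem stmt_10 {α : Type*} [Finite α] (H L M : Subgroup (Equiv.Perm α))
    (hL : IsDisjointDirectFactor H L) (hM : IsDisjointDirectFactor H M)
    (hind : DDPIndecomposable M)
    (hmeet : Supp M ∩ Supp L ≠ ∅) :
    Supp M ⊆ Supp L := by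
  classical
  obtain ⟨hLH, hLres⟩ := hL
  obtain ⟨hMH, hMres⟩ := hM
  set S : Set α := Supp M ∩ Supp L with hSdef
  set T : Set α := Supp M \ Supp L with hTdef
  -- fixed points: elements of M fix points outside Supp M
  have hfixM : ∀ m ∈ M, ∀ x, x ∉ Supp M → m x = x := by
    intro m hm x hx
    by_contra h
    exact hx ⟨m, hm, h⟩
  -- key decomposition: every m ∈ M splits as a product of an element supported
  -- in S and an element supported in T.
  have hsplit : ∀ m ∈ M, ∃ a ∈ restrSubgroup M S, ∃ b ∈ restrSubgroup M T,
      m = a * b ∧ (∀ x ∈ S, a x = m x) := by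
    intro m hm
    obtain ⟨l, hl, hl1, hl2⟩ := hLres m (hMH hm)
    obtain ⟨a, ha, ha1, ha2⟩ := hMres l (hLH hl)
    have haS : ∀ x ∉ S, a x = x := by
      intro x hx
      by_cases hxM : x ∈ Supp M
      · have hxL : x ∉ Supp L := fun h => hx ⟨hxM, h⟩
        rw [ha1 x hxM, hl2 x hxL]
      · exact ha2 x hxM
    have haSval : ∀ x ∈ S, a x = m x := by
      intro x hx
      rw [ha1 x hx.1, hl1 x hx.2]
    refine ⟨a, ⟨ha, haS⟩, a⁻¹ * m, ⟨M.mul_mem (M.inv_mem ha) hm, ?_⟩, by group, haSval⟩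
    intro x hx
    by_cases hxS : x ∈ S
    · show a⁻¹ (m x) = x
      rw [Equiv.Perm.inv_eq_iff_eq]
      exact (haSval x hxS).symm
    · by_cases hxM : x ∈ Supp M
      · exact absurd ⟨hxM, not_not.mp fun hxL => hx ⟨hxM, hxL⟩⟩ hxS
      · show a⁻¹ (m x) = x
        rw [hfixM m hm x hxM, Equiv.Perm.inv_eq_iff_eq, haS x hxS]
  -- the two restricted subgroups
  set M₁ := restrSubgroup M S with hM₁
  set M₂ := restrSubgroup M T with hM₂
  -- M₁ is nontrivial
  have hM₁ne : M₁ ≠ ⊥ := by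
    obtain ⟨x, hxS⟩ := Set.nonempty_iff_ne_empty.mpr hmeet
    obtain ⟨m, hm, hmx⟩ := hxS.1
    obtain ⟨a, haM₁, b, hbM₂, hab, haval⟩ := hsplit m hm
    intro hbot
    have : a x = m x := haval x hxS
    have ha1 : a = 1 := by
      have := hbot ▸ haM₁
      simpa [Subgroup.mem_bot] using this
    rw [ha1] at this
    exact hmx this.symm
  -- suppose some point of Supp M is outside Supp L; then M₂ is nontrivial too
  intro y hy
  by_contra hyL
  have hM₂ne : M₂ ≠ ⊥ := by
    obtain ⟨m, hm, hmy⟩ := hy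
    obtain ⟨a, haM₁, b, hbM₂, hab, haval⟩ := hsplit m hm
    intro hbot
    have hb1 : b = 1 := by
      have := hbot ▸ hbM₂
      simpa [Subgroup.mem_bot] using this
    rw [hb1, mul_one] at hab
    have : a y = y := haM₁.2 y (fun hyS => hyL hyS.2)
    rw [← hab] at this
    exact hmy this
  -- build a 2-factor d.d.p. decomposition of M
  set F : Fin 2 → Subgroup (Equiv.Perm α) := ![M₁, M₂] with hF
  have hdec : IsDDPDecomposition M F := by
    refine ⟨?_, ?_, ?_⟩
    · intro i
      fin_cases i
      · simpa [hF] using hM₁ne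
      · simpa [hF] using hM₂ne
    · intro i j hij
      have hd : Disjoint (Supp M₁) (Supp M₂) := by
        have h1 : Supp M₁ ⊆ Supp L := fun x hx => (supp_restr_subset M S hx).2
        have h2 : Supp M₂ ⊆ (Supp L)ᶜ := fun x hx => (supp_restr_subset M T hx).2
        exact Set.disjoint_left.mpr fun x hx1 hx2 => (h2 hx2) (h1 hx1)
      fin_cases i <;> fin_cases j <;>
        first | exact absurd rfl hij | exact hd | exact hd.symm
    · apply le_antisymm
      · apply iSup_le
        intro i
        fin_cases i
        · exact fun g hg => hg.1
        · exact fun g hg => hg.1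
      · intro m hm
        obtain ⟨a, haM₁, b, hbM₂, hab, _⟩ := hsplit m hm
        rw [hab]
        exact Subgroup.mul_mem _
          (Subgroup.mem_iSup_of_mem (0 : Fin 2) (by simpa [hF] using haM₁))
          (Subgroup.mem_iSup_of_mem (1 : Fin 2) (by simpa [hF] using hbM₂))
  have := hind 2 F hdec
  omega
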